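/- Consider the R-linear maps A : R³ → R³ defined by A(x,y,z) = (Q·x, V·x + Q·y, V·y + Q·z), and B : R³ → R³ defined by B(x,y,z) = (Q²·x, Q·V·x + Q²·y, V²·x + Q·V·y + Q²·z). Then ker(A) = range(B) and ker(B) = range(A); in particular A and B form a 2-periodic exact sequence of free R-modules. -/

import Mathlib

open Polynomial CategoryTheory

noncomputable section

/-- The field `F = ℤ/2ℤ`. -/
abbrev Fld := ZMod 2

/-- The polynomial ring `F[[V]][Q]` (polynomials in `Q` over the power series ring `F[[V]]`). -/
abbrev Rpoly := Polynomial (PowerSeries Fld)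

/-- The ring `R = F[[V]][Q]/(Q³)`. -/
abbrev Rring := Rpoly ⧸ Ideal.span ({(X : Rpoly) ^ 3} : Set Rpoly)

/-- `Q`, the image in `R` of the polynomial variable. -/
def Qe : Rring := Ideal.Quotient.mk (Ideal.span ({(X : Rpoly) ^ 3} : Set Rpoly)) (X : Rpoly)

/-- `V`, the image in `R` of the power series variable. -/
def Ve : Rring := Ideal.Quotient.mk (Ideal.span ({(X : Rpoly) ^ 3} : Set Rpoly)) (C PowerSeries.X)
/-- `A(x,y,z) = (Q·x, V·x + Q·y, V·y + Q·z)`. -/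
def A3 : (Rring × Rring × Rring) →ₗ[Rring] (Rring × Rring × Rring) where
  toFun p := (Qe * p.1, Ve * p.1 + Qe * p.2.1, Ve * p.2.1 + Qe * p.2.2)
  map_add' p q := by
    simp only [Prod.ext_iff, Prod.fst_add, Prod.snd_add, Prod.mk_add_mk]
    refine ⟨by ring, by ring, by ring⟩
  map_smul' r p := by
    simp only [Prod.ext_iff, Prod.smul_fst, Prod.smul_snd, Prod.smul_mk, smul_eq_mul,
      RingHom.id_apply]
    refine ⟨by ring, by ring, by ring⟩

/-- `B(x,y,z) = (Q²·x, Q·V·x + Q²·y, V²·x + Q·V·y + Q²·z)`. -/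
def B3 : (Rring × Rring × Rring) →ₗ[Rring] (Rring × Rring × Rring) where
  toFun p := (Qe ^ 2 * p.1, Qe * Ve * p.1 + Qe ^ 2 * p.2.1,
    Ve ^ 2 * p.1 + Qe * Ve * p.2.1 + Qe ^ 2 * p.2.2)
  map_add' p q := by
    simp only [Prod.ext_iff, Prod.fst_add, Prod.snd_add, Prod.mk_add_mk]
    refine ⟨by ring, by ring, by ring⟩
  map_smul' r p := by
    simp only [Prod.ext_iff, Prod.smul_fst, Prod.smul_snd, Prod.smul_mk, smul_eq_mul,
      RingHom.id_apply]
    refine ⟨by ring, by ring, by ring⟩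


lemma Qe_pow3 : Qe ^ 3 = 0 := by
  have h : ((X : Rpoly) ^ 3) ∈ Ideal.span ({(X : Rpoly) ^ 3} : Set Rpoly) :=
    Ideal.subset_span rfl
  have h0 := Ideal.Quotient.eq_zero_iff_mem.mpr h
  calc Qe ^ 3 = Ideal.Quotient.mk _ ((X : Rpoly) ^ 3) := (map_pow _ _ _).symm
    _ = 0 := h0

lemma two_zero : (2 : Rring) = 0 := by
  have h : (2 : Rpoly) = 0 := by
    have : (2 : PowerSeries Fld) = 0 := by
      have : (2 : Fld) = 0 := rfl
      calc (2 : PowerSeries Fld) = PowerSeries.C (2 : Fld) := by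
            simp [map_ofNat]
        _ = 0 := by rw [this, map_zero]
    calc (2 : Rpoly) = C (2 : PowerSeries Fld) := by simp [map_ofNat]
      _ = 0 := by rw [this, map_zero]
  calc (2 : Rring) = Ideal.Quotient.mk _ (2 : Rpoly) := by simp [map_ofNat]
    _ = 0 := by rw [h, map_zero]

lemma cancelQ {w : Rring} (h : Qe * w = 0) : ∃ u, w = Qe ^ 2 * u := by
  obtain ⟨p, rfl⟩ := Ideal.Quotient.mk_surjective w
  have hm : (X : Rpoly) * p ∈ Ideal.span ({(X : Rpoly) ^ 3} : Set Rpoly) := by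
    rw [← Ideal.Quotient.eq_zero_iff_mem, map_mul]
    simpa [Qe] using h
  rw [Ideal.mem_span_singleton] at hm
  obtain ⟨t, ht⟩ := hm
  have hp : p = X ^ 2 * t := by
    apply mul_left_cancel₀ (X_ne_zero : (X : Rpoly) ≠ 0)
    rw [ht]; ring
  exact ⟨Ideal.Quotient.mk _ t, by rw [hp, map_mul, map_pow]; rfl⟩

lemma cancelQ2 {w : Rring} (h : Qe ^ 2 * w = 0) : ∃ u, w = Qe * u := by
  obtain ⟨p, rfl⟩ := Ideal.Quotient.mk_surjective w
  have hm : (X : Rpoly) ^ 2 * p ∈ Ideal.span ({(X : Rpoly) ^ 3} : Set Rpoly) := by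
    rw [← Ideal.Quotient.eq_zero_iff_mem, map_mul, map_pow]
    simpa [Qe] using h
  rw [Ideal.mem_span_singleton] at hm
  obtain ⟨t, ht⟩ := hm
  have hp : p = X * t := by
    apply mul_left_cancel₀ (pow_ne_zero 2 (X_ne_zero : (X : Rpoly) ≠ 0))
    rw [ht]; ring
  exact ⟨Ideal.Quotient.mk _ t, by rw [hp, map_mul]; rfl⟩

/-- `ker A = range B` and `ker B = range A`; in particular `A` and `B` compose to
zero in either order, forming a 2-periodic exact sequence of free `R`-modules. -/
theorem stmt12 :
    LinearMap.ker A3 = LinearMap.range B3 ∧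
    LinearMap.ker B3 = LinearMap.range A3 ∧
    A3 ∘ₗ B3 = 0 ∧ B3 ∘ₗ A3 = 0 := by
  have h2 := two_zero
  have hQ3 := Qe_pow3
  have hAB : A3 ∘ₗ B3 = 0 := by
    apply LinearMap.ext
    rintro ⟨x, y, z⟩
    simp only [LinearMap.comp_apply, A3, B3, LinearMap.coe_mk, AddHom.coe_mk,
      LinearMap.zero_apply, Prod.mk.injEq, Prod.ext_iff, Prod.fst_zero, Prod.snd_zero]
    refine ⟨by linear_combination x * hQ3, ?_, ?_⟩
    · linear_combination (Qe ^ 2 * Ve * x) * h2 + y * hQ3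
    · linear_combination (Qe * Ve ^ 2 * x + Qe ^ 2 * Ve * y) * h2 + z * hQ3
  have hBA : B3 ∘ₗ A3 = 0 := by
    apply LinearMap.ext
    rintro ⟨x, y, z⟩
    simp only [LinearMap.comp_apply, A3, B3, LinearMap.coe_mk, AddHom.coe_mk,
      LinearMap.zero_apply, Prod.mk.injEq, Prod.ext_iff, Prod.fst_zero, Prod.snd_zero]
    refine ⟨by linear_combination x * hQ3, ?_, ?_⟩
    · linear_combination (Qe ^ 2 * Ve * x) * h2 + y * hQ3
    · linear_combination (Qe * Ve ^ 2 * x + Qe ^ 2 * Ve * y) * h2 + z * hQ3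
  refine ⟨?_, ?_, hAB, hBA⟩
  · apply le_antisymm
    · rintro ⟨x, y, z⟩ hk
      rw [LinearMap.mem_ker] at hk
      have hk' : Qe * x = 0 ∧ Ve * x + Qe * y = 0 ∧ Ve * y + Qe * z = 0 := by
        simpa [A3, Prod.ext_iff] using hk
      obtain ⟨hx, hy, hz⟩ := hk'
      obtain ⟨u, hu⟩ := cancelQ hx
      obtain ⟨b, hb⟩ := cancelQ (show Qe * (y + Qe * Ve * u) = 0 by
        linear_combination hy - Ve * hu)
      obtain ⟨c, hc⟩ := cancelQ (show Qe * (z + Ve ^ 2 * u + Qe * Ve * b) = 0 by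
        linear_combination hz - Ve * hb + (Qe * Ve ^ 2 * u) * h2)
      refine ⟨(u, b, c), ?_⟩
      simp only [B3, LinearMap.coe_mk, AddHom.coe_mk, Prod.mk.injEq, Prod.ext_iff]
      refine ⟨by linear_combination -hu, ?_, ?_⟩
      · linear_combination -hb + (Qe * Ve * u) * h2
      · linear_combination -hc + (Ve ^ 2 * u + Qe * Ve * b) * h2
    · rintro ⟨x, y, z⟩ ⟨p, hp⟩
      rw [LinearMap.mem_ker, ← hp, ← LinearMap.comp_apply, hAB, LinearMap.zero_apply]
  · apply le_antisymm
    · rintro ⟨x, y, z⟩ hk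
      rw [LinearMap.mem_ker] at hk
      have hk' : Qe ^ 2 * x = 0 ∧ Qe * Ve * x + Qe ^ 2 * y = 0 ∧
          Ve ^ 2 * x + Qe * Ve * y + Qe ^ 2 * z = 0 := by
        simpa [B3, Prod.ext_iff] using hk
      obtain ⟨hx, hy, hz⟩ := hk'
      obtain ⟨a, ha⟩ := cancelQ2 hx
      obtain ⟨b, hb⟩ := cancelQ2 (show Qe ^ 2 * (y + Ve * a) = 0 by
        linear_combination hy - Qe * Ve * ha)
      obtain ⟨c, hc⟩ := cancelQ2 (show Qe ^ 2 * (z + Ve * b) = 0 by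
        linear_combination hz - Ve ^ 2 * ha - Qe * Ve * hb)
      refine ⟨(a, b, c), ?_⟩
      simp only [A3, LinearMap.coe_mk, AddHom.coe_mk, Prod.mk.injEq, Prod.ext_iff]
      refine ⟨by linear_combination -ha, ?_, ?_⟩
      · linear_combination -hb + (Ve * a) * h2
      · linear_combination -hc + (Ve * b) * h2
    · rintro ⟨x, y, z⟩ ⟨p, hp⟩
      rw [LinearMap.mem_ker, ← hp, ← LinearMap.comp_apply, hBA, LinearMap.zero_apply]
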